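/- In the restart framework: (a) if K_i < +∞ for all i = 1, …, q, then q ≤ ⌊ ln(1 + (f(x⁰) − f*)/(f* − f_slb)) / ln(1/B) ⌋; and (b) if both K_i and K_{i+1} are finite for some i ≥ 1, then K_i ≤ J_i. -/

import Mathlib

/-- Proposition: in the restart framework, (a) the number of finite
restarts is bounded, and (b) `K_i ≤ J_i` whenever `K_i` and `K_{i+1}` are finite. -/
theorem restart_framework_counts {n : ℕ} (Q : Set (EuclideanSpace ℝ (Fin n)))
    (hQne : Q.Nonempty) (hQcl : IsClosed Q) (hQcv : Convex ℝ Q)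
    (f : EuclideanSpace ℝ (Fin n) → ℝ) (hfc : ConvexOn ℝ Q f)
    (fstar : ℝ) (hattain : ∃ z ∈ Q, f z = fstar) (hmin : ∀ z ∈ Q, fstar ≤ f z)
    (fslb : ℝ) (hslb : fslb < fstar)
    (B v ε' : ℝ) (hB : 0 < B) (hv : 0 < v) (hBv : v ≤ B - B ^ 2) (hB2v : 2 * v ≤ B)
    (hε' : 0 < ε')
    (x y : ℕ → ℕ → EuclideanSpace ℝ (Fin n)) (K : ℕ → ℕ∞)
    (x0 : EuclideanSpace ℝ (Fin n)) (hx0 : x0 ∈ Q)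
    (hx10 : x 1 0 = x0) (hy10 : y 1 0 = x0)
    (hmem : ∀ i j : ℕ, 1 ≤ i → (j : ℕ∞) ≤ K i → x i j ∈ Q ∧ y i j ∈ Q)
    (hKlt : ∀ i j : ℕ, 1 ≤ i → (j : ℕ∞) < K i →
      B ≤ (f (x i j) - fslb) / (f (x i 0) - fslb))
    (hKeq : ∀ i j : ℕ, 1 ≤ i → K i = (j : ℕ∞) →
      (f (x i j) - fslb) / (f (x i 0) - fslb) < B)
    (hrestart : ∀ i j : ℕ, 1 ≤ i → K i = (j : ℕ∞) →
      x (i + 1) 0 = x i j ∧ y (i + 1) 0 = x i j)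
    (J I : ℕ → ℕ)
    (hJ : ∀ i k : ℕ, 1 ≤ i → J i ≤ k → (k : ℕ∞) ≤ K i →
      f (x i k) - fstar ≤ v * (f (x i 0) - fslb))
    (hI : ∀ i k : ℕ, 1 ≤ i → I i ≤ k → (k : ℕ∞) ≤ K i →
      f (y i k) - fstar ≤ v * ε' * (f (x i 0) - fslb)) :
    (∀ q : ℕ, (∀ i : ℕ, 1 ≤ i → i ≤ q → K i ≠ ⊤) →
      (q : ℤ) ≤ ⌊Real.log (1 + (f x0 - fstar) / (fstar - fslb)) / Real.log (1 / B)⌋) ∧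
    (∀ i : ℕ, 1 ≤ i → K i ≠ ⊤ → K (i + 1) ≠ ⊤ → K i ≤ (J i : ℕ∞)) := by

  have hB1 : B < 1 := by nlinarith
  have hc : 0 < fstar - fslb := by linarith
  have hmemQ : ∀ i : ℕ, 1 ≤ i → x i 0 ∈ Q := by
    intro i hi
    exact (hmem i 0 hi (by exact_mod_cast (zero_le : (0:ℕ∞) ≤ K i))).1
  have hdpos : ∀ i : ℕ, 1 ≤ i → fstar - fslb ≤ f (x i 0) - fslb := by
    intro i hi
    have := hmin _ (hmemQ i hi)
    linarith
  have hstep : ∀ i : ℕ, 1 ≤ i → K i ≠ ⊤ →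
      f (x (i + 1) 0) - fslb < B * (f (x i 0) - fslb) := by
    intro i hi hKi
    obtain ⟨k, hk⟩ := WithTop.ne_top_iff_exists.mp hKi
    have h1 := hKeq i k hi hk.symm
    have h2 := (hrestart i k hi hk.symm).1
    have dpos : 0 < f (x i 0) - fslb := lt_of_lt_of_le hc (hdpos i hi)
    rw [div_lt_iff₀ dpos] at h1
    rw [h2]
    linarith
  constructor
  · intro q hq
    have key : ∀ m : ℕ, m ≤ q → f (x (m + 1) 0) - fslb ≤ B ^ m * (f (x 1 0) - fslb) := by
      intro m
      induction m with
      | zero => intro _; simp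
      | succ m ih =>
        intro hm
        have h1 := ih (le_of_lt (Nat.lt_of_succ_le hm))
        have h2 := hstep (m + 1) (Nat.le_add_left 1 m) (hq (m + 1) (Nat.le_add_left 1 m) hm)
        have hBm : (0:ℝ) < B ^ m := pow_pos hB m
        refine le_of_lt ?_
        calc f (x (m + 1 + 1) 0) - fslb < B * (f (x (m + 1) 0) - fslb) := h2
          _ ≤ B * (B ^ m * (f (x 1 0) - fslb)) := by nlinarith
          _ = B ^ (m + 1) * (f (x 1 0) - fslb) := by ring
    have hfin : fstar - fslb ≤ B ^ q * (f x0 - fslb) := by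
      have := key q le_rfl
      rw [hx10] at this
      exact le_trans (hdpos (q + 1) (Nat.le_add_left 1 q)) this
    have hd1 : 0 < f x0 - fslb := by
      have := hmin _ hx0; linarith
    have hBq : (0:ℝ) < B ^ q := pow_pos hB q
    have hratio : (1 / B) ^ q ≤ (f x0 - fslb) / (fstar - fslb) := by
      rw [one_div, inv_pow, inv_eq_one_div, div_le_div_iff₀ hBq hc]
      linarith
    have hlog : (q : ℝ) * Real.log (1 / B) ≤
        Real.log ((f x0 - fslb) / (fstar - fslb)) := by
      rw [← Real.log_pow]
      exact Real.log_le_log (pow_pos (by positivity) q) hratio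
    have hlogB : 0 < Real.log (1 / B) := by
      apply Real.log_pos
      rw [lt_div_iff₀ hB]
      linarith
    have hfrac : 1 + (f x0 - fstar) / (fstar - fslb) = (f x0 - fslb) / (fstar - fslb) := by
      field_simp
      ring
    rw [Int.le_floor, hfrac]
    push_cast
    rw [le_div_iff₀ hlogB]
    exact hlog
  · intro i hi hKi hKi1
    by_contra hnot
    obtain ⟨k, hk⟩ := WithTop.ne_top_iff_exists.mp hKi
    obtain ⟨k', hk'⟩ := WithTop.ne_top_iff_exists.mp hKi1
    have hJk : J i < k := by
      have : (J i : ℕ∞) < K i := lt_of_not_ge hnot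
      rw [← hk] at this
      exact ENat.coe_lt_coe.mp this
    have dpos : 0 < f (x i 0) - fslb := lt_of_lt_of_le hc (hdpos i hi)
    -- d_{i+1} < B * d_i
    have h2 := (hrestart i k hi hk.symm).1
    have hd1 : f (x (i + 1) 0) - fslb < B * (f (x i 0) - fslb) := hstep i hi hKi
    -- fstar - fslb < B * d_{i+1}
    have dpos1 : 0 < f (x (i + 1) 0) - fslb :=
      lt_of_lt_of_le hc (hdpos (i + 1) (Nat.le_add_left 1 i))
    have h3 := hKeq (i + 1) k' (Nat.le_add_left 1 i) hk'.symm
    rw [div_lt_iff₀ dpos1] at h3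
    have hmem' := (hmem (i + 1) k' (Nat.le_add_left 1 i) (le_of_eq hk')).1
    have h4 : fstar - fslb < B * (f (x (i + 1) 0) - fslb) := by
      have := hmin _ hmem'
      linarith
    have h5 : fstar - fslb < B ^ 2 * (f (x i 0) - fslb) := by nlinarith
    -- now at j = J i
    have hJlt : ((J i : ℕ) : ℕ∞) < K i := by
      rw [← hk]; exact ENat.coe_lt_coe.mpr hJk
    have h6 := hKlt i (J i) hi hJlt
    rw [le_div_iff₀ dpos] at h6
    have h7 := hJ i (J i) hi le_rfl (le_of_lt hJlt)
    nlinarith
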